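/- Let C be a rectifiable curve in [0,1]^d realizing the optimal TSP path through a finite point set F, and let R2 ⊆ [0,1]^d. Then the length of C ∩ R2 is at least the boundary TSP length T_B(F, R2). -/

import Mathlib

open Metric Set MeasureTheory Filter
open scoped Classical ENNReal BigOperators

noncomputable section

/-- Length of the polygonal path visiting the points of the list in order,
for a (pseudo-)distance function `D`. -/
def pathLen {E : Type*} (D : E → E → ℝ) : List E → ℝ
  | [] => 0
  | [_] => 0
  | a :: b :: l => D a b + pathLen D (b :: l)

/-- Length of a shortest Hamiltonian path through a finite set of points,
for the (pseudo-)distance `D`. -/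
def tspWith {E : Type*} (D : E → E → ℝ) (F : Finset E) : ℝ :=
  sInf {L : ℝ | ∃ l : List E, l.Nodup ∧ l.toFinset = F ∧ pathLen D l = L}

/-- The points of `F` lying in the region `R`. -/
def restr {E : Type*} (F : Finset E) (R : Set E) : Finset E :=
  F.filter (fun x => x ∈ R)

/-- Euclidean TSP length `T(F, R)`: shortest Hamiltonian path through `F ∩ R`. -/
def tsp {E : Type*} [PseudoMetricSpace E] (F : Finset E) (R : Set E) : ℝ :=
  tspWith dist (restr F R)

/-- The boundary pseudo-metric of a region `R`: the Euclidean metric, quotiented so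
that travel along the boundary `∂R` is free. -/
def bMetric {E : Type*} [PseudoMetricSpace E] (R : Set E) (a b : E) : ℝ :=
  min (dist a b) (Metric.infDist a (frontier R) + Metric.infDist b (frontier R))

/-- Boundary TSP length `T_B(F, R)`: shortest Hamiltonian tour on `F ∩ R` for the
boundary pseudo-metric of `R`. -/
def btsp {E : Type*} [PseudoMetricSpace E] (F : Finset E) (R : Set E) : ℝ :=
  tspWith (bMetric R) (restr F R)

/-- The unit hypercube `[0,1]^d`. -/
def unitCube (d : ℕ) : Set (EuclideanSpace ℝ (Fin d)) :=
  {x | ∀ i, x i ∈ Set.Icc (0 : ℝ) 1}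

/-- The closed subcube of edge length `1/m` indexed by `k` in the partition of `[0,1]^d`
into `m^d` congruent subcubes. -/
def subcube (d m : ℕ) (k : Fin d → Fin m) : Set (EuclideanSpace ℝ (Fin d)) :=
  {x | ∀ i, x i ∈ Set.Icc ((k i : ℝ) / m) (((k i : ℝ) + 1) / m)}

/-- The half-open subcube of edge length `1/m` indexed by `k`. -/
def subcubeIco (d m : ℕ) (k : Fin d → Fin m) : Set (EuclideanSpace ℝ (Fin d)) :=
  {x | ∀ i, x i ∈ Set.Ico ((k i : ℝ) / m) (((k i : ℝ) + 1) / m)}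


lemma pathLen_nonneg {E : Type*} {D : E → E → ℝ} (hD : ∀ a b, 0 ≤ D a b) :
    ∀ l : List E, 0 ≤ pathLen D l
  | [] => le_refl 0
  | [_] => le_refl 0
  | a :: b :: l => add_nonneg (hD a b) (pathLen_nonneg hD (b :: l))

lemma pathLen_chain {E : Type*} {D : E → E → ℝ} {P : E → Prop} {τ : E → ℝ}
    {V : ℝ → ℝ} {W : ℝ → ℝ → ℝ}
    (hV0 : ∀ u, 0 ≤ V u)
    (hstep : ∀ a b, P a → P b → τ a ≤ τ b → D a b ≤ W (τ a) (τ b))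
    (hsum : ∀ a b, P a → P b → τ a ≤ τ b → W (τ a) (τ b) + V (τ b) ≤ V (τ a)) :
    ∀ (l : List E) (a : E), (a :: l).Pairwise (fun x y => τ x ≤ τ y) →
      (∀ x ∈ a :: l, P x) → pathLen D (a :: l) ≤ V (τ a)
  | [], a, _, _ => hV0 (τ a)
  | b :: t, a, hp, hP => by
    have hab : τ a ≤ τ b := (List.pairwise_cons.1 hp).1 b (by simp)
    have hPa : P a := hP a (by simp)
    have hPb : P b := hP b (by simp)
    have ih := pathLen_chain hV0 hstep hsum t b (List.pairwise_cons.1 hp).2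
      (fun x hx => hP x (List.mem_cons_of_mem a hx))
    calc pathLen D (a :: b :: t) = D a b + pathLen D (b :: t) := rfl
      _ ≤ W (τ a) (τ b) + V (τ b) := add_le_add (hstep a b hPa hPb hab) ih
      _ ≤ V (τ a) := hsum a b hPa hPb hab

lemma step_bound {E : Type*} [PseudoMetricSpace E] (R2 : Set E) (γ : ℝ → E) (L : ℝ)
    (hL0 : 0 ≤ L)
    (hlip : LipschitzOnWith (Real.toNNReal L) γ (Set.Icc (0:ℝ) 1))
    {s t : ℝ} (hs : s ∈ Set.Icc (0:ℝ) 1) (ht : t ∈ Set.Icc (0:ℝ) 1) (hst : s ≤ t)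
    (hγs : γ s ∈ R2) (hγt : γ t ∈ R2) :
    bMetric R2 (γ s) (γ t) ≤ L * (volume (γ ⁻¹' R2 ∩ Set.Ico s t)).toReal := by
  have hK : (Real.toNNReal L : ℝ) = L := Real.coe_toNNReal L hL0
  have hdist : ∀ u ∈ Set.Icc (0:ℝ) 1, ∀ v ∈ Set.Icc (0:ℝ) 1, u ≤ v →
      dist (γ u) (γ v) ≤ L * (v - u) := by
    intro u hu v hv huv
    have := hlip.dist_le_mul u hu v hv
    rwa [hK, Real.dist_eq, abs_of_nonpos (by linarith), neg_sub] at this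
  by_cases hA : ∀ r ∈ Set.Ico s t, γ r ∈ R2
  · have hsub : Set.Ico s t ⊆ γ ⁻¹' R2 := fun r hr => hA r hr
    have heq : γ ⁻¹' R2 ∩ Set.Ico s t = Set.Ico s t :=
      Set.inter_eq_self_of_subset_right hsub
    rw [heq, Real.volume_Ico, ENNReal.toReal_ofReal (by linarith)]
    exact le_trans (min_le_left _ _) (hdist s hs t ht hst)
  · push_neg at hA
    obtain ⟨r₀, hr₀, hr₀R⟩ := hA
    set B : Set ℝ := {r | r ∈ Set.Icc s t ∧ γ r ∉ R2} with hBdef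
    have hBsub : B ⊆ Set.Icc s t := fun r hr => hr.1
    have hBne : B.Nonempty := ⟨r₀, Set.Ico_subset_Icc_self hr₀, hr₀R⟩
    have hBbd : BddBelow B := ⟨s, fun r hr => hr.1.1⟩
    have hBba : BddAbove B := ⟨t, fun r hr => hr.1.2⟩
    set p := sInf B with hp
    set q := sSup B with hq
    have hsp : s ≤ p := le_csInf hBne (fun r hr => hr.1.1)
    have hqt : q ≤ t := csSup_le hBne (fun r hr => hr.1.2)
    have hpq : p ≤ q := csInf_le_csSup hBne hBbd hBba
    have hp01 : p ∈ Set.Icc (0:ℝ) 1 := ⟨le_trans hs.1 hsp, le_trans (hpq.trans hqt) ht.2⟩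
    have hq01 : q ∈ Set.Icc (0:ℝ) 1 := ⟨le_trans hs.1 (hsp.trans hpq), le_trans hqt ht.2⟩
    have hcont : ContinuousOn γ (Set.Icc (0:ℝ) 1) := hlip.continuousOn
    -- γ p ∈ frontier R2
    have hIcoSub : Set.Ico s p ⊆ γ ⁻¹' R2 := by
      intro r hr
      by_contra hrR
      exact absurd (csInf_le hBbd ⟨⟨hr.1, le_trans hr.2.le (hpq.trans hqt)⟩, hrR⟩)
        (not_le.2 hr.2)
    have hIooSub : Set.Ioo q t ⊆ γ ⁻¹' R2 := by
      intro r hr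
      by_contra hrR
      exact absurd (le_csSup hBba ⟨⟨le_trans (hsp.trans hpq) hr.1.le, hr.2.le⟩, hrR⟩)
        (not_le.2 hr.1)
    have hfp : γ p ∈ frontier R2 := by
      rw [frontier_eq_closure_inter_closure]
      constructor
      · rcases eq_or_lt_of_le hsp with h | h
        · exact subset_closure (h ▸ hγs)
        · have hmem : p ∈ closure (Set.Ico s p) := by
            rw [closure_Ico (ne_of_lt h)]; exact Set.right_mem_Icc.2 h.le
          have hcw : ContinuousWithinAt γ (Set.Ico s p) p :=
            (hcont p hp01).mono (fun r hr => ⟨le_trans hs.1 hr.1, le_trans hr.2.le hp01.2⟩)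
          refine closure_mono ?_ (hcw.mem_closure_image hmem)
          rw [Set.image_subset_iff]; exact hIcoSub
      · have hmem : p ∈ closure B := csInf_mem_closure hBne hBbd
        have hcw : ContinuousWithinAt γ B p :=
          (hcont p hp01).mono (fun r hr => ⟨le_trans hs.1 hr.1.1, le_trans hr.1.2 ht.2⟩)
        refine closure_mono ?_ (hcw.mem_closure_image hmem)
        rw [Set.image_subset_iff]; exact fun r hr => hr.2
    have hfq : γ q ∈ frontier R2 := by
      rw [frontier_eq_closure_inter_closure]
      constructor
      · rcases eq_or_lt_of_le hqt with h | h
        · exact subset_closure (h ▸ hγt)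
        · have hmem : q ∈ closure (Set.Ioo q t) := by
            rw [closure_Ioo (ne_of_lt h)]; exact Set.left_mem_Icc.2 h.le
          have hcw : ContinuousWithinAt γ (Set.Ioo q t) q :=
            (hcont q hq01).mono (fun r hr => ⟨le_trans hq01.1 hr.1.le, le_trans hr.2.le ht.2⟩)
          refine closure_mono ?_ (hcw.mem_closure_image hmem)
          rw [Set.image_subset_iff]; exact hIooSub
      · have hmem : q ∈ closure B := csSup_mem_closure hBne hBba
        have hcw : ContinuousWithinAt γ B q :=
          (hcont q hq01).mono (fun r hr => ⟨le_trans hs.1 hr.1.1, le_trans hr.1.2 ht.2⟩)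
        refine closure_mono ?_ (hcw.mem_closure_image hmem)
        rw [Set.image_subset_iff]; exact fun r hr => hr.2
    -- distance bounds
    have hd1 : infDist (γ s) (frontier R2) ≤ L * (p - s) :=
      le_trans (infDist_le_dist_of_mem hfp) (hdist s hs p hp01 hsp)
    have hd2 : infDist (γ t) (frontier R2) ≤ L * (t - q) := by
      refine le_trans (infDist_le_dist_of_mem hfq) ?_
      rw [dist_comm]
      exact hdist q hq01 t ht hqt
    -- measure superadditivity
    have hfin : volume (γ ⁻¹' R2 ∩ Set.Ico s t) ≠ ⊤ := by
      refine ne_top_of_le_ne_top ?_ (measure_mono Set.inter_subset_right)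
      rw [Real.volume_Ico]; exact ENNReal.ofReal_ne_top
    have hkey : ENNReal.ofReal (p - s) + ENNReal.ofReal (t - q) ≤
        volume (γ ⁻¹' R2 ∩ Set.Ico s t) := by
      have hmeas := measure_inter_add_diff (μ := volume) (t := Set.Ico s p)
        (γ ⁻¹' R2 ∩ Set.Ico s t) measurableSet_Ico
      rw [← hmeas]
      gcongr
      · rw [← Real.volume_Ico (a := s) (b := p)]
        refine measure_mono ?_
        intro r hr
        exact ⟨⟨hIcoSub hr, hr.1, lt_of_lt_of_le hr.2 (hpq.trans hqt)⟩, hr⟩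
      · rw [← Real.volume_Ioo (a := q) (b := t)]
        refine measure_mono ?_
        intro r hr
        refine ⟨⟨hIooSub hr, le_trans (hsp.trans hpq) hr.1.le, hr.2⟩, ?_⟩
        intro hr'
        exact absurd (lt_of_le_of_lt hr'.2.le (lt_of_le_of_lt hpq hr.1)) (lt_irrefl r)
    have hkey' : (p - s) + (t - q) ≤ (volume (γ ⁻¹' R2 ∩ Set.Ico s t)).toReal := by
      have h1 : ENNReal.ofReal ((p - s) + (t - q)) ≤ volume (γ ⁻¹' R2 ∩ Set.Ico s t) := by
        rw [ENNReal.ofReal_add (by linarith) (by linarith)]; exact hkey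
      have := ENNReal.toReal_mono hfin h1
      rwa [ENNReal.toReal_ofReal (by linarith)] at this
    calc bMetric R2 (γ s) (γ t)
        ≤ infDist (γ s) (frontier R2) + infDist (γ t) (frontier R2) := min_le_right _ _
      _ ≤ L * (p - s) + L * (t - q) := add_le_add hd1 hd2
      _ = L * ((p - s) + (t - q)) := by ring
      _ ≤ L * (volume (γ ⁻¹' R2 ∩ Set.Ico s t)).toReal :=
          mul_le_mul_of_nonneg_left hkey' hL0

/-- the length of the portion inside `R2` of an optimal TSP curve
through `F` is at least the boundary TSP length `T_B(F, R2)`. The optimal curve is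
parameterized on `[0,1]` at constant speed `L = T(F, Ω)`, so the length of `C ∩ R2`
is `L · λ(γ⁻¹(R2))`. -/
theorem restricted_tsp_ge_boundary_tsp {d : ℕ} (hd : 2 ≤ d)
    (F : Finset (EuclideanSpace ℝ (Fin d))) (hF : ∀ x ∈ F, x ∈ unitCube d)
    (R2 : Set (EuclideanSpace ℝ (Fin d))) (hR2 : R2 ⊆ unitCube d)
    (γ : ℝ → EuclideanSpace ℝ (Fin d)) (L : ℝ)
    (hL : L = tsp F (unitCube d))
    (hrange : ∀ t ∈ Set.Icc (0:ℝ) 1, γ t ∈ unitCube d)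
    (hlip : LipschitzOnWith (Real.toNNReal L) γ (Set.Icc (0:ℝ) 1))
    (hvisit : ∀ x ∈ restr F (unitCube d), ∃ t ∈ Set.Icc (0:ℝ) 1, γ t = x)
    (hlen : eVariationOn γ (Set.Icc (0:ℝ) 1) = ENNReal.ofReal L) :
    btsp F R2 ≤ L * (volume (γ ⁻¹' R2 ∩ Set.Icc (0:ℝ) 1)).toReal := by
  classical
  have hL0 : 0 ≤ L := by
    rw [hL]
    unfold tsp tspWith
    refine le_csInf ⟨pathLen dist (restr F (unitCube d)).toList,
      (restr F (unitCube d)).toList, Finset.nodup_toList _, by convert Finset.toList_toFinset _, rfl⟩ ?_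
    rintro x ⟨l, -, -, rfl⟩
    exact pathLen_nonneg (fun a b => dist_nonneg) l
  set X : Set ℝ := γ ⁻¹' R2 with hX
  set τ : EuclideanSpace ℝ (Fin d) → ℝ :=
    fun x => if h : ∃ t, t ∈ Set.Icc (0:ℝ) 1 ∧ γ t = x then h.choose else 0 with hτ
  have hP : ∀ x ∈ restr F R2, τ x ∈ Set.Icc (0:ℝ) 1 ∧ γ (τ x) = x ∧ x ∈ R2 := by
    intro x hx
    have hxF : x ∈ F := (Finset.mem_filter.1 hx).1
    have hxR : x ∈ R2 := (Finset.mem_filter.1 hx).2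
    have hx' : x ∈ restr F (unitCube d) := Finset.mem_filter.2 ⟨hxF, hF x hxF⟩
    have hex : ∃ t, t ∈ Set.Icc (0:ℝ) 1 ∧ γ t = x := hvisit x hx'
    have hτx : τ x = hex.choose := by rw [hτ]; exact dif_pos hex
    rw [hτx]
    exact ⟨hex.choose_spec.1, hex.choose_spec.2, hxR⟩
  haveI : IsTotal (EuclideanSpace ℝ (Fin d)) (fun a b => τ a ≤ τ b) := ⟨fun a b => le_total _ _⟩
  haveI : IsTrans (EuclideanSpace ℝ (Fin d)) (fun a b => τ a ≤ τ b) := ⟨fun a b c => le_trans⟩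
  obtain ⟨l, hnodup, htf, hsorted, hmem⟩ : ∃ l : List (EuclideanSpace ℝ (Fin d)), l.Nodup ∧
      l.toFinset = restr F R2 ∧ l.Pairwise (fun a b => τ a ≤ τ b) ∧
      ∀ x ∈ l, x ∈ restr F R2 := by
    refine ⟨List.insertionSort (fun a b => τ a ≤ τ b) (restr F R2).toList, ?_, ?_, ?_, ?_⟩
    · exact (List.perm_insertionSort _ _).nodup_iff.2 (Finset.nodup_toList _)
    · ext x
      rw [List.mem_toFinset]
      exact ⟨fun h => Finset.mem_toList.1 ((List.perm_insertionSort _ _).mem_iff.1 h),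
        fun h => (List.perm_insertionSort _ _).mem_iff.2 (Finset.mem_toList.2 h)⟩
    · exact List.pairwise_insertionSort _ _
    · intro x hx
      exact Finset.mem_toList.1 ((List.perm_insertionSort _ _).mem_iff.1 hx)
  have hbt : btsp F R2 ≤ pathLen (bMetric R2) l := by
    unfold btsp tspWith
    refine csInf_le ⟨0, ?_⟩ ⟨l, hnodup, by convert htf, rfl⟩
    rintro x ⟨l', -, -, rfl⟩
    exact pathLen_nonneg (fun a b => le_min dist_nonneg
      (add_nonneg Metric.infDist_nonneg Metric.infDist_nonneg)) l'
  have hfin0 : volume (X ∩ Set.Icc (0:ℝ) 1) ≠ ⊤ := by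
    refine ne_top_of_le_ne_top ?_ (measure_mono Set.inter_subset_right)
    rw [Real.volume_Icc]; exact ENNReal.ofReal_ne_top
  match l, hsorted, hmem with
  | [], _, _ =>
    exact hbt.trans (mul_nonneg hL0 ENNReal.toReal_nonneg)
  | a :: tl, hsorted, hmem =>
    have hPall : ∀ x ∈ a :: tl, τ x ∈ Set.Icc (0:ℝ) 1 ∧ γ (τ x) = x ∧ x ∈ R2 :=
      fun x hx => hP x (hmem x hx)
    have hchain : pathLen (bMetric R2) (a :: tl) ≤
        L * (volume (X ∩ Set.Icc (τ a) 1)).toReal := by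
      refine pathLen_chain (V := fun u => L * (volume (X ∩ Set.Icc u 1)).toReal)
        (W := fun u v => L * (volume (X ∩ Set.Ico u v)).toReal)
        (P := fun x => τ x ∈ Set.Icc (0:ℝ) 1 ∧ γ (τ x) = x ∧ x ∈ R2)
        (fun u => mul_nonneg hL0 ENNReal.toReal_nonneg) ?_ ?_ tl a hsorted hPall
      · intro a b Pa Pb hab
        have hsb := step_bound R2 γ L hL0 hlip Pa.1 Pb.1 hab
          (by rw [Pa.2.1]; exact Pa.2.2) (by rw [Pb.2.1]; exact Pb.2.2)
        rwa [Pa.2.1, Pb.2.1] at hsb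
      · intro a b Pa Pb hab
        have hfinA : volume (X ∩ Set.Icc (τ a) 1) ≠ ⊤ := by
          refine ne_top_of_le_ne_top ?_ (measure_mono Set.inter_subset_right)
          rw [Real.volume_Icc]; exact ENNReal.ofReal_ne_top
        have hkey : volume (X ∩ Set.Ico (τ a) (τ b)) + volume (X ∩ Set.Icc (τ b) 1) ≤
            volume (X ∩ Set.Icc (τ a) 1) := by
          rw [← measure_inter_add_diff (μ := volume) (t := Set.Ico (τ a) (τ b))
            (X ∩ Set.Icc (τ a) 1) measurableSet_Ico]
          refine add_le_add (measure_mono ?_) (measure_mono ?_)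
          · rintro r ⟨hrX, hr1, hr2⟩
            exact ⟨⟨hrX, hr1, le_trans hr2.le Pb.1.2⟩, hr1, hr2⟩
          · rintro r ⟨hrX, hr1, hr2⟩
            exact ⟨⟨hrX, hab.trans hr1, hr2⟩, fun h => (not_lt.2 hr1) h.2⟩
        have h1 : volume (X ∩ Set.Ico (τ a) (τ b)) ≠ ⊤ :=
          ne_top_of_le_ne_top hfinA (le_trans le_self_add hkey)
        have h2 : volume (X ∩ Set.Icc (τ b) 1) ≠ ⊤ :=
          ne_top_of_le_ne_top hfinA (le_trans le_add_self hkey)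
        rw [← mul_add]
        refine mul_le_mul_of_nonneg_left ?_ hL0
        rw [← ENNReal.toReal_add h1 h2]
        exact ENNReal.toReal_mono hfinA hkey
    refine hbt.trans (hchain.trans ?_)
    refine mul_le_mul_of_nonneg_left ?_ hL0
    refine ENNReal.toReal_mono hfin0 (measure_mono ?_)
    exact Set.inter_subset_inter_right _ (Set.Icc_subset_Icc_left (hPall a (by simp)).1.1)
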